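/- Let N ≥ 1 and let u₀ ∈ L¹(ℝ^N) have finite second absolute moment 𝒩₂ = ∫_{ℝ^N} |y|² |u₀(y)| dy < ∞. Let M = ∫_{ℝ^N} u₀(x) dx, let 𝒩_{1,i} = ∫_{ℝ^N} y_i u₀(y) dy for i = 1,…,N, and let u(x,t) = ∫_{ℝ^N} G_t(x−y) u₀(y) dy. Then there is a constant C > 0 depending only on N such that for all t > 0, ∫_{ℝ^N} |u(x,t) − M·G_t(x) + Σᵢ 𝒩_{1,i} ∂_{x_i} G_t(x)| dx ≤ C·𝒩₂·t^{−1}. -/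

import Mathlib

open MeasureTheory Real Filter
open scoped ENNReal NNReal

/-- The Gaussian heat kernel on `ℝ^N`: `G_t(x) = (4πt)^{-N/2} exp(-|x|²/(4t))`. -/
noncomputable def heatKernel (N : ℕ) (t : ℝ) (x : EuclideanSpace ℝ (Fin N)) : ℝ :=
  (4 * π * t) ^ (-(N : ℝ) / 2) * exp (-‖x‖ ^ 2 / (4 * t))

/-- The solution of the heat equation with initial data `u₀`, given by convolution
with the heat kernel: `u(x,t) = ∫ G_t(x-y) u₀(y) dy`. -/
noncomputable def heatSol (N : ℕ) (u₀ : EuclideanSpace ℝ (Fin N) → ℝ)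
    (x : EuclideanSpace ℝ (Fin N)) (t : ℝ) : ℝ :=
  ∫ y, heatKernel N t (x - y) * u₀ y

/-! ### Auxiliary lemmas -/

lemma gauss_integrable (N : ℕ) {b : ℝ} (hb : 0 < b) :
    Integrable (fun v : EuclideanSpace ℝ (Fin N) => rexp (-b * ‖v‖ ^ 2)) := by
  have h := (GaussianFourier.integrable_cexp_neg_mul_sq_norm_add
    (V := EuclideanSpace ℝ (Fin N)) (b := (b : ℂ)) (by simpa using hb) 0 0).re
  refine h.congr (Filter.Eventually.of_forall fun v => ?_)
  show Complex.re (Complex.exp _) = _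
  have heq : (-(b:ℂ) * (‖v‖:ℂ) ^ 2 +
      0 * ((inner ℝ (0 : EuclideanSpace ℝ (Fin N)) v : ℝ) : ℂ)) = ((-b * ‖v‖^2 : ℝ) : ℂ) := by
    push_cast; ring
  rw [heq, ← Complex.ofReal_exp, Complex.ofReal_re]

lemma gauss_sq_integrable (N : ℕ) {b : ℝ} (hb : 0 < b) :
    Integrable (fun v : EuclideanSpace ℝ (Fin N) => ‖v‖ ^ 2 * rexp (-b * ‖v‖ ^ 2)) := by
  have h2 : (0:ℝ) < b/2 := by linarith
  refine ((gauss_integrable N h2).const_mul (2/b)).mono'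
    (Continuous.aestronglyMeasurable (by continuity)) ?_
  refine Filter.Eventually.of_forall fun v => ?_
  have h1 : ‖v‖^2 ≤ 2/b * rexp (b/2 * ‖v‖^2) := by
    have h := Real.add_one_le_exp (b/2 * ‖v‖^2)
    have hb' : 0 < (2:ℝ)/b := by positivity
    have key : 2/b * (b/2 * ‖v‖^2 + 1) ≤ 2/b * rexp (b/2 * ‖v‖^2) :=
      mul_le_mul_of_nonneg_left h hb'.le
    have : 2/b * (b/2 * ‖v‖^2 + 1) = ‖v‖^2 + 2/b := by field_simp
    linarith
  rw [Real.norm_eq_abs, abs_of_nonneg (by positivity)]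
  calc ‖v‖^2 * rexp (-b * ‖v‖^2) ≤ (2/b * rexp (b/2 * ‖v‖^2)) * rexp (-b * ‖v‖^2) := by
        apply mul_le_mul_of_nonneg_right h1 (Real.exp_pos _).le
    _ = 2/b * rexp (-(b/2) * ‖v‖^2) := by rw [mul_assoc, ← Real.exp_add]; ring_nf

noncomputable def gaussB (N : ℕ) : ℝ :=
  ∫ v : EuclideanSpace ℝ (Fin N), ‖v‖ ^ 2 * rexp (-(4⁻¹) * ‖v‖ ^ 2)

lemma gaussB_nonneg (N : ℕ) : 0 ≤ gaussB N :=
  integral_nonneg fun v => by positivity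

lemma heatKernel_eq (N : ℕ) (t : ℝ) (ht : 0 < t) (x : EuclideanSpace ℝ (Fin N)) :
    heatKernel N t x = (4 * π * t) ^ (-(N : ℝ) / 2) * rexp (-(1 / (4 * t)) * ‖x‖ ^ 2) := by
  unfold heatKernel; congr 1; field_simp

lemma heatKernel_nonneg (N : ℕ) (t : ℝ) (ht : 0 < t) (x : EuclideanSpace ℝ (Fin N)) :
    0 ≤ heatKernel N t x := by
  unfold heatKernel
  have h4 : 0 < 4 * π * t := by positivity
  positivity

lemma heatKernel_continuous (N : ℕ) (t : ℝ) : Continuous (heatKernel N t) := by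
  unfold heatKernel
  fun_prop

lemma heatKernel_integrable (N : ℕ) {t : ℝ} (ht : 0 < t) :
    Integrable (heatKernel N t) := by
  have : heatKernel N t = fun x => (4 * π * t) ^ (-(N : ℝ) / 2) *
      rexp (-(1 / (4 * t)) * ‖x‖ ^ 2) := funext fun x => heatKernel_eq N t ht x
  rw [this]
  exact (gauss_integrable N (by positivity)).const_mul _

lemma sq_heatKernel_integrable (N : ℕ) {t : ℝ} (ht : 0 < t) :
    Integrable (fun x : EuclideanSpace ℝ (Fin N) => ‖x‖ ^ 2 * heatKernel N t x) := by
  refine ((gauss_sq_integrable N (b := 1/(4*t)) (by positivity)).const_mul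
    ((4 * π * t) ^ (-(N : ℝ) / 2))).congr (Filter.Eventually.of_forall fun x => ?_)
  simp only [heatKernel_eq N t ht]; ring

lemma integral_heatKernel (N : ℕ) {t : ℝ} (ht : 0 < t) :
    ∫ x : EuclideanSpace ℝ (Fin N), heatKernel N t x = 1 := by
  have h1 : ∀ x : EuclideanSpace ℝ (Fin N), heatKernel N t x =
      (4 * π * t) ^ (-(N : ℝ) / 2) * rexp (-(1 / (4 * t)) * ‖x‖ ^ 2) :=
    heatKernel_eq N t ht
  rw [show (heatKernel N t) = fun x => (4 * π * t) ^ (-(N : ℝ) / 2) *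
      rexp (-(1 / (4 * t)) * ‖x‖ ^ 2) from funext h1, integral_const_mul,
    GaussianFourier.integral_rexp_neg_mul_sq_norm (by positivity : (0:ℝ) < 1/(4*t))]
  have h2 : π / (1 / (4 * t)) = 4 * π * t := by field_simp
  rw [h2, finrank_euclideanSpace_fin, ← Real.rpow_add (by positivity),
    show -(N : ℝ) / 2 + (N : ℝ) / 2 = 0 by ring, Real.rpow_zero]

lemma integral_sq_heatKernel (N : ℕ) {t : ℝ} (ht : 0 < t) :
    ∫ x : EuclideanSpace ℝ (Fin N), ‖x‖ ^ 2 * heatKernel N t x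
      = (4 * π) ^ (-(N : ℝ) / 2) * gaussB N * t := by
  have hst : (0:ℝ) < Real.sqrt t := Real.sqrt_pos.mpr ht
  have h := MeasureTheory.Measure.integral_comp_smul_of_nonneg
    (volume : Measure (EuclideanSpace ℝ (Fin N)))
    (fun z => ‖z‖ ^ 2 * heatKernel N t z) (Real.sqrt t) (hR := hst.le)
  rw [finrank_euclideanSpace_fin] at h
  have hval : ∀ x : EuclideanSpace ℝ (Fin N),
      ‖Real.sqrt t • x‖ ^ 2 * heatKernel N t (Real.sqrt t • x)
        = (t * (4 * π * t) ^ (-(N : ℝ) / 2)) * (‖x‖ ^ 2 * rexp (-(4⁻¹) * ‖x‖ ^ 2)) := by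
    intro x
    have hn : ‖Real.sqrt t • x‖ ^ 2 = t * ‖x‖ ^ 2 := by
      rw [norm_smul, mul_pow, Real.norm_eq_abs, sq_abs, Real.sq_sqrt ht.le]
    rw [heatKernel_eq N t ht, hn]
    have harg : -(1 / (4 * t)) * (t * ‖x‖ ^ 2) = -(4⁻¹) * ‖x‖ ^ 2 := by
      field_simp
    rw [harg]; ring
  simp only [hval] at h
  rw [integral_const_mul] at h
  have hne : (Real.sqrt t ^ N : ℝ) ≠ 0 := pow_ne_zero _ hst.ne'
  rw [smul_eq_mul] at h
  have key : ∫ z : EuclideanSpace ℝ (Fin N), ‖z‖ ^ 2 * heatKernel N t z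
      = (Real.sqrt t) ^ N * ((t * (4 * π * t) ^ (-(N : ℝ) / 2)) * gaussB N) := by
    have h3 : Real.sqrt t ^ N * ((Real.sqrt t ^ N)⁻¹ *
        (∫ x : EuclideanSpace ℝ (Fin N), ‖x‖ ^ 2 * heatKernel N t x))
        = ∫ x : EuclideanSpace ℝ (Fin N), ‖x‖ ^ 2 * heatKernel N t x := by
      rw [← mul_assoc, mul_inv_cancel₀ hne, one_mul]
    rw [← h3, ← h]
    unfold gaussB
    ring
  rw [key]
  have hp1 : (Real.sqrt t) ^ N = t ^ ((N : ℝ) / 2) := by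
    rw [Real.sqrt_eq_rpow, ← Real.rpow_natCast (t ^ ((1:ℝ)/2)) N, ← Real.rpow_mul ht.le]
    congr 1; ring
  have hp2 : (4 * π * t) ^ (-(N : ℝ) / 2) = (4 * π) ^ (-(N : ℝ) / 2) * t ^ (-(N : ℝ) / 2) :=
    Real.mul_rpow (by positivity) ht.le
  rw [hp1, hp2]
  have hp3 : t ^ ((N : ℝ) / 2) * t ^ (-(N : ℝ) / 2) = 1 := by
    rw [← Real.rpow_add ht, show (N : ℝ) / 2 + -(N : ℝ) / 2 = 0 by ring, Real.rpow_zero]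
  calc t ^ ((N : ℝ) / 2) * (t * ((4 * π) ^ (-(N : ℝ) / 2) * t ^ (-(N : ℝ) / 2)) * gaussB N)
      = (t ^ ((N : ℝ) / 2) * t ^ (-(N : ℝ) / 2)) * ((4 * π) ^ (-(N : ℝ) / 2) * gaussB N * t) := by
        ring
    _ = (4 * π) ^ (-(N : ℝ) / 2) * gaussB N * t := by rw [hp3, one_mul]

/-- The constant in the kernel estimate. -/
noncomputable def heatC0 (N : ℕ) : ℝ := (4 * π) ^ (-(N : ℝ) / 2) * gaussB N / 4 + 1 / 2

lemma heatC0_pos (N : ℕ) : 0 < heatC0 N := by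
  have h1 : 0 ≤ (4 * π) ^ (-(N : ℝ) / 2) * gaussB N / 4 := by
    have := gaussB_nonneg N
    have h2 : (0:ℝ) ≤ (4 * π) ^ (-(N : ℝ) / 2) := Real.rpow_nonneg (by positivity) _
    positivity
  unfold heatC0; linarith

/-- The comparison function. -/
noncomputable def heatW (N : ℕ) (t : ℝ) (z : EuclideanSpace ℝ (Fin N)) : ℝ :=
  (‖z‖ ^ 2 / (4 * t ^ 2) + 1 / (2 * t)) * heatKernel N t z

lemma heatW_integrable (N : ℕ) {t : ℝ} (ht : 0 < t) : Integrable (heatW N t) := by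
  refine (((sq_heatKernel_integrable N ht).const_mul (1/(4*t^2))).add
    ((heatKernel_integrable N ht).const_mul (1/(2*t)))).congr
    (Filter.Eventually.of_forall fun z => ?_)
  simp only [Pi.add_apply]
  unfold heatW; ring

lemma heatW_integral (N : ℕ) {t : ℝ} (ht : 0 < t) :
    ∫ z, heatW N t z = heatC0 N / t := by
  have hrw : (fun z : EuclideanSpace ℝ (Fin N) => heatW N t z) =
      fun z => (1/(4*t^2)) * (‖z‖ ^ 2 * heatKernel N t z) + (1/(2*t)) * heatKernel N t z :=
    funext fun z => by unfold heatW; ring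
  rw [hrw, integral_add ((sq_heatKernel_integrable N ht).const_mul _)
    ((heatKernel_integrable N ht).const_mul _), integral_const_mul, integral_const_mul,
    integral_sq_heatKernel N ht, integral_heatKernel N ht]
  unfold heatC0
  field_simp

set_option maxHeartbeats 800000 in
lemma heat_taylor_bound (N : ℕ) {t : ℝ} (ht : 0 < t) (x y : EuclideanSpace ℝ (Fin N)) :
    |heatKernel N t (x - y) - heatKernel N t x -
        ((inner ℝ x y : ℝ) / (2 * t)) * heatKernel N t x| ≤
      ∫ r in (0:ℝ)..1, ‖y‖ ^ 2 *
        ((‖x - r • y‖ ^ 2 / (4 * t ^ 2) + 1 / (2 * t)) * heatKernel N t (x - r • y)) := by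
  set ip : ℝ := (inner ℝ x y : ℝ) with hip
  set c : ℝ := (4 * π * t) ^ (-(N : ℝ) / 2) with hc
  set p : ℝ → ℝ := fun s => ‖x‖ ^ 2 - 2 * s * ip + s ^ 2 * ‖y‖ ^ 2 with hp
  set p' : ℝ → ℝ := fun s => -2 * ip + 2 * s * ‖y‖ ^ 2 with hp'
  set g : ℝ → ℝ := fun s => c * rexp (-p s / (4 * t)) with hg
  set q : ℝ → ℝ := fun s => -p' s / (4 * t) with hq
  set g1 : ℝ → ℝ := fun s => g s * q s with hg1
  set g2 : ℝ → ℝ := fun s => (g s * q s) * q s + g s * (-(2 * ‖y‖ ^ 2) / (4 * t)) with hg2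
  have hnorm : ∀ s : ℝ, ‖x - s • y‖ ^ 2 = p s := by
    intro s
    rw [norm_sub_sq_real, real_inner_smul_right, norm_smul]
    simp only [Real.norm_eq_abs, mul_pow, sq_abs, hp]
    ring
  have hgs : ∀ s : ℝ, g s = heatKernel N t (x - s • y) := by
    intro s
    show c * rexp (-p s / (4 * t)) = heatKernel N t (x - s • y)
    unfold heatKernel
    rw [hnorm s]
  have hderiv_p : ∀ s : ℝ, HasDerivAt p (p' s) s := by
    intro s
    have h1 : HasDerivAt (fun s : ℝ => 2 * s * ip) (2 * ip) s := by
      simpa using (((hasDerivAt_id s).const_mul (2:ℝ)).mul_const ip)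
    have h2 : HasDerivAt (fun s : ℝ => s ^ 2 * ‖y‖ ^ 2) (2 * s * ‖y‖ ^ 2) s := by
      have := (hasDerivAt_pow 2 s).mul_const (‖y‖ ^ 2)
      simpa using this
    have h3 := ((hasDerivAt_const s (‖x‖ ^ 2)).sub h1).add h2
    rw [zero_sub] at h3
    show HasDerivAt (fun s => ‖x‖ ^ 2 - 2 * s * ip + s ^ 2 * ‖y‖ ^ 2) (-2 * ip + 2 * s * ‖y‖ ^ 2) s
    exact h3.congr_deriv (by ring)
  have hderiv_g : ∀ s : ℝ, HasDerivAt g (g1 s) s := by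
    intro s
    have hq' : HasDerivAt (fun s => -p s / (4 * t)) (q s) s := ((hderiv_p s).neg).div_const (4 * t)
    have := ((Real.hasDerivAt_exp (-p s / (4 * t))).comp s hq').const_mul c
    exact this.congr_deriv (by simp only [hg1, hg]; ring)
  have hderiv_q : ∀ s : ℝ, HasDerivAt q (-(2 * ‖y‖ ^ 2) / (4 * t)) s := by
    intro s
    have h1 : HasDerivAt p' (2 * ‖y‖ ^ 2) s := by
      have h2 : HasDerivAt (fun s : ℝ => 2 * s * ‖y‖ ^ 2) (2 * ‖y‖ ^ 2) s := by
        simpa using (((hasDerivAt_id s).const_mul (2:ℝ)).mul_const (‖y‖ ^ 2))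
      have h3 := (hasDerivAt_const s (-2 * ip : ℝ)).add h2
      rw [zero_add] at h3
      exact h3
    exact (h1.neg).div_const (4 * t)
  have hderiv_g1 : ∀ s : ℝ, HasDerivAt g1 (g2 s) s := by
    intro s
    exact (hderiv_g s).mul (hderiv_q s)
  have hcont_g : Continuous g := by fun_prop
  have hcont_q : Continuous q := by
    apply Continuous.div_const
    fun_prop
  have hcont_g1 : Continuous g1 := hcont_g.mul hcont_q
  have hcont_g2 : Continuous g2 := ((hcont_g1.mul hcont_q).add (hcont_g.mul continuous_const))
  have h10 : g 1 - g 0 = ∫ s in (0:ℝ)..1, g1 s :=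
    (intervalIntegral.integral_eq_sub_of_hasDerivAt (fun s _ => hderiv_g s)
      (hcont_g1.intervalIntegrable 0 1)).symm
  have h1s : ∀ s ∈ Set.Icc (0:ℝ) 1, g1 s - g1 0 = ∫ r in (0:ℝ)..s, g2 r := by
    intro s _
    exact (intervalIntegral.integral_eq_sub_of_hasDerivAt (fun r _ => hderiv_g1 r)
      (hcont_g2.intervalIntegrable 0 s)).symm
  have htarget : heatKernel N t (x - y) - heatKernel N t x -
      ((inner ℝ x y : ℝ) / (2 * t)) * heatKernel N t x = g 1 - g 0 - g1 0 := by
    have e1 : g 1 = heatKernel N t (x - y) := by rw [hgs 1, one_smul]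
    have e0 : g 0 = heatKernel N t x := by
      rw [hgs 0, zero_smul, sub_zero]
    have e2 : g1 0 = (ip / (2 * t)) * heatKernel N t x := by
      show g 0 * q 0 = (ip / (2 * t)) * heatKernel N t x
      have hq0 : q 0 = ip / (2 * t) := by
        show -(-2 * ip + 2 * 0 * ‖y‖ ^ 2) / (4 * t) = ip / (2 * t)
        field_simp
        ring
      rw [e0, hq0]; ring
    rw [e1, e0, e2, ← hip]
  have hg2bound : ∀ r : ℝ, |g2 r| ≤ ‖y‖ ^ 2 *
      ((‖x - r • y‖ ^ 2 / (4 * t ^ 2) + 1 / (2 * t)) * heatKernel N t (x - r • y)) := by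
    intro r
    have hgnn : 0 ≤ g r := by rw [hgs r]; exact heatKernel_nonneg N t ht _
    have hqb : |q r| ≤ ‖x - r • y‖ * ‖y‖ / (2 * t) := by
      have hpr : p' r = -2 * (inner ℝ (x - r • y) y : ℝ) := by
        rw [inner_sub_left, real_inner_smul_left, real_inner_self_eq_norm_sq, hp', ← hip]
        ring
      show |-p' r / (4 * t)| ≤ ‖x - r • y‖ * ‖y‖ / (2 * t)
      rw [hpr]
      rw [neg_div, abs_neg, abs_div, abs_of_nonneg (by positivity : (0:ℝ) ≤ 4 * t)]
      rw [div_le_div_iff₀ (by positivity) (by positivity)]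
      have h1 : |-2 * (inner ℝ (x - r • y) y : ℝ)| = 2 * |(inner ℝ (x - r • y) y : ℝ)| := by
        rw [abs_mul]; norm_num
      rw [h1]
      nlinarith [abs_real_inner_le_norm (x - r • y) y, ht,
        mul_le_mul_of_nonneg_left (abs_real_inner_le_norm (x - r • y) y)
          (by positivity : (0:ℝ) ≤ 4 * t)]
    have habs : |g2 r| ≤ g r * (q r) ^ 2 + g r * ((2 * ‖y‖ ^ 2) / (4 * t)) := by
      have e1 : |g r * q r * q r| = g r * (q r) ^ 2 := by
        rw [abs_mul, abs_mul, abs_of_nonneg hgnn, mul_assoc, abs_mul_abs_self, sq]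
      have e2 : |g r * (-(2 * ‖y‖ ^ 2) / (4 * t))| = g r * ((2 * ‖y‖ ^ 2) / (4 * t)) := by
        rw [abs_mul, abs_of_nonneg hgnn, abs_div, abs_neg,
          abs_of_nonneg (by positivity : (0:ℝ) ≤ 2 * ‖y‖ ^ 2),
          abs_of_nonneg (by positivity : (0:ℝ) ≤ 4 * t)]
      calc |g2 r| = |g r * q r * q r + g r * (-(2 * ‖y‖ ^ 2) / (4 * t))| := rfl
        _ ≤ |g r * q r * q r| + |g r * (-(2 * ‖y‖ ^ 2) / (4 * t))| := abs_add_le _ _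
        _ = g r * (q r) ^ 2 + g r * ((2 * ‖y‖ ^ 2) / (4 * t)) := by rw [e1, e2]
    have hq2 : (q r) ^ 2 ≤ ‖x - r • y‖ ^ 2 * ‖y‖ ^ 2 / (4 * t ^ 2) := by
      have h := mul_self_le_mul_self (abs_nonneg (q r)) hqb
      have e3 : ‖x - r • y‖ * ‖y‖ / (2 * t) * (‖x - r • y‖ * ‖y‖ / (2 * t))
          = ‖x - r • y‖ ^ 2 * ‖y‖ ^ 2 / (4 * t ^ 2) := by
        field_simp; ring
      calc (q r) ^ 2 = |q r| * |q r| := by rw [abs_mul_abs_self, sq]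
        _ ≤ ‖x - r • y‖ * ‖y‖ / (2 * t) * (‖x - r • y‖ * ‖y‖ / (2 * t)) := h
        _ = _ := e3
    calc |g2 r| ≤ g r * (q r) ^ 2 + g r * ((2 * ‖y‖ ^ 2) / (4 * t)) := habs
      _ ≤ g r * (‖x - r • y‖ ^ 2 * ‖y‖ ^ 2 / (4 * t ^ 2)) + g r * ((2 * ‖y‖ ^ 2) / (4 * t)) :=
          add_le_add_left (mul_le_mul_of_nonneg_left hq2 hgnn) _
      _ = ‖y‖ ^ 2 * ((‖x - r • y‖ ^ 2 / (4 * t ^ 2) + 1 / (2 * t)) * g r) := by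
          field_simp; ring
      _ = ‖y‖ ^ 2 * ((‖x - r • y‖ ^ 2 / (4 * t ^ 2) + 1 / (2 * t)) * heatKernel N t (x - r • y)) := by
          rw [hgs r]
  have hInt_g2abs : IntervalIntegrable (fun r => |g2 r|) volume 0 1 :=
    (hcont_g2.abs).intervalIntegrable 0 1
  have hcont_psi : Continuous (fun r : ℝ => ‖y‖ ^ 2 *
      ((‖x - r • y‖ ^ 2 / (4 * t ^ 2) + 1 / (2 * t)) * heatKernel N t (x - r • y))) := by
    have hc1 : Continuous fun r : ℝ => x - r • y :=
      continuous_const.sub (continuous_id.smul continuous_const)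
    have hc2 := (heatKernel_continuous N t).comp hc1
    exact continuous_const.mul
      ((((hc1.norm.pow 2).div_const _).add continuous_const).mul hc2)
  have key : |g 1 - g 0 - g1 0| ≤ ∫ r in (0:ℝ)..1, |g2 r| := by
    have hsub : g 1 - g 0 - g1 0 = ∫ s in (0:ℝ)..1, (g1 s - g1 0) := by
      rw [intervalIntegral.integral_sub (hcont_g1.intervalIntegrable 0 1)
        (intervalIntegrable_const), ← h10]
      simp only [intervalIntegral.integral_const, sub_zero, smul_eq_mul, one_mul]
    rw [hsub]
    calc |∫ s in (0:ℝ)..1, (g1 s - g1 0)| ≤ ∫ s in (0:ℝ)..1, |g1 s - g1 0| :=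
          intervalIntegral.abs_integral_le_integral_abs zero_le_one
      _ ≤ ∫ s in (0:ℝ)..1, (∫ r in (0:ℝ)..1, |g2 r|) := by
          apply intervalIntegral.integral_mono_on zero_le_one
            ((hcont_g1.sub continuous_const).abs.intervalIntegrable 0 1)
            intervalIntegrable_const
          intro s hs
          show |g1 s - g1 0| ≤ ∫ r in (0:ℝ)..1, |g2 r|
          rw [h1s s hs]
          calc |∫ r in (0:ℝ)..s, g2 r| ≤ ∫ r in (0:ℝ)..s, |g2 r| :=
                intervalIntegral.abs_integral_le_integral_abs hs.1
            _ ≤ ∫ r in (0:ℝ)..1, |g2 r| :=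
                intervalIntegral.integral_mono_interval le_rfl hs.1 hs.2
                  (Filter.Eventually.of_forall fun r => abs_nonneg _) hInt_g2abs
      _ = ∫ r in (0:ℝ)..1, |g2 r| := by simp
  rw [htarget]
  refine key.trans (intervalIntegral.integral_mono_on zero_le_one hInt_g2abs
    (hcont_psi.intervalIntegrable 0 1) fun r _ => hg2bound r)

lemma heat_kernel_lintegral_bound (N : ℕ) {t : ℝ} (ht : 0 < t) (y : EuclideanSpace ℝ (Fin N)) :
    ∫⁻ x : EuclideanSpace ℝ (Fin N), ‖heatKernel N t (x - y) - heatKernel N t x -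
        ((inner ℝ x y : ℝ) / (2 * t)) * heatKernel N t x‖₊ ≤
      ENNReal.ofReal (heatC0 N * ‖y‖ ^ 2 / t) := by
  have hc1 : Continuous fun p : EuclideanSpace ℝ (Fin N) × ℝ => p.1 - p.2 • y :=
    continuous_fst.sub (continuous_snd.smul continuous_const)
  have hcont_psi2 : Continuous (fun p : EuclideanSpace ℝ (Fin N) × ℝ => ‖y‖ ^ 2 *
      ((‖p.1 - p.2 • y‖ ^ 2 / (4 * t ^ 2) + 1 / (2 * t)) * heatKernel N t (p.1 - p.2 • y))) :=
    continuous_const.mul ((((hc1.norm.pow 2).div_const _).add continuous_const).mul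
      ((heatKernel_continuous N t).comp hc1))
  have hpsinn : ∀ (x : EuclideanSpace ℝ (Fin N)) (r : ℝ), 0 ≤ ‖y‖ ^ 2 *
      ((‖x - r • y‖ ^ 2 / (4 * t ^ 2) + 1 / (2 * t)) * heatKernel N t (x - r • y)) := by
    intro x r
    have h1 := heatKernel_nonneg N t ht (x - r • y)
    have h2 : (0:ℝ) ≤ ‖x - r • y‖ ^ 2 / (4 * t ^ 2) + 1 / (2 * t) := by positivity
    positivity
  calc ∫⁻ x : EuclideanSpace ℝ (Fin N), ‖heatKernel N t (x - y) - heatKernel N t x -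
        ((inner ℝ x y : ℝ) / (2 * t)) * heatKernel N t x‖₊
      ≤ ∫⁻ x : EuclideanSpace ℝ (Fin N), ENNReal.ofReal (∫ r in (0:ℝ)..1, ‖y‖ ^ 2 *
          ((‖x - r • y‖ ^ 2 / (4 * t ^ 2) + 1 / (2 * t)) * heatKernel N t (x - r • y))) := by
        apply lintegral_mono
        intro x
        dsimp only
        rw [← enorm_eq_nnnorm, Real.enorm_eq_ofReal_abs]
        exact ENNReal.ofReal_le_ofReal (heat_taylor_bound N ht x y)
    _ = ∫⁻ x : EuclideanSpace ℝ (Fin N), ∫⁻ r in Set.Ioc (0:ℝ) 1, ENNReal.ofReal (‖y‖ ^ 2 *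
          ((‖x - r • y‖ ^ 2 / (4 * t ^ 2) + 1 / (2 * t)) * heatKernel N t (x - r • y))) := by
        apply lintegral_congr
        intro x
        rw [intervalIntegral.integral_of_le zero_le_one,
          ofReal_integral_eq_lintegral_ofReal]
        · exact (hcont_psi2.comp (Continuous.prodMk_right x)).integrableOn_Ioc
        · exact Filter.Eventually.of_forall fun r => hpsinn x r
    _ = ∫⁻ r in Set.Ioc (0:ℝ) 1, ∫⁻ x : EuclideanSpace ℝ (Fin N), ENNReal.ofReal (‖y‖ ^ 2 *
          ((‖x - r • y‖ ^ 2 / (4 * t ^ 2) + 1 / (2 * t)) * heatKernel N t (x - r • y))) :=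
        lintegral_lintegral_swap (hcont_psi2.measurable.ennreal_ofReal.aemeasurable)
    _ = ∫⁻ _ in Set.Ioc (0:ℝ) 1, ENNReal.ofReal (heatC0 N * ‖y‖ ^ 2 / t) := by
        apply lintegral_congr
        intro r
        have hint : Integrable (fun x : EuclideanSpace ℝ (Fin N) => ‖y‖ ^ 2 *
            ((‖x - r • y‖ ^ 2 / (4 * t ^ 2) + 1 / (2 * t)) * heatKernel N t (x - r • y))) := by
          have := ((heatW_integrable N ht).comp_sub_right (r • y)).const_mul (‖y‖ ^ 2)
          exact this.congr (Filter.Eventually.of_forall fun x => by unfold heatW; ring)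
        rw [← ofReal_integral_eq_lintegral_ofReal hint
          (Filter.Eventually.of_forall fun x => hpsinn x r)]
        congr 1
        have e : (fun x : EuclideanSpace ℝ (Fin N) => ‖y‖ ^ 2 *
            ((‖x - r • y‖ ^ 2 / (4 * t ^ 2) + 1 / (2 * t)) * heatKernel N t (x - r • y)))
            = fun x => ‖y‖ ^ 2 * heatW N t (x - r • y) := by
          funext x; unfold heatW; ring
        rw [e, integral_const_mul, integral_sub_right_eq_self (heatW N t) (r • y),
          heatW_integral N ht]
        ring
    _ = ENNReal.ofReal (heatC0 N * ‖y‖ ^ 2 / t) := by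
        rw [setLIntegral_const]
        simp [Real.volume_Ioc]

lemma heat_decomp (N : ℕ) (u₀ : EuclideanSpace ℝ (Fin N) → ℝ) (hu : Integrable u₀)
    (hu2 : Integrable (fun y => ‖y‖ ^ 2 * |u₀ y|)) {t : ℝ} (ht : 0 < t)
    (x : EuclideanSpace ℝ (Fin N)) :
    heatSol N u₀ x t - (∫ y, u₀ y) * heatKernel N t x +
        ∑ i : Fin N, (∫ y : EuclideanSpace ℝ (Fin N), y i * u₀ y) *
          (-(x i / (2 * t)) * heatKernel N t x)
      = ∫ y, (heatKernel N t (x - y) - heatKernel N t x -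
          ((inner ℝ x y : ℝ) / (2 * t)) * heatKernel N t x) * u₀ y := by
  have hc := heatKernel_continuous N t
  have hKle : ∀ z : EuclideanSpace ℝ (Fin N), heatKernel N t z ≤ (4*π*t) ^ (-(N:ℝ)/2) := by
    intro z
    unfold heatKernel
    have h1 : rexp (-‖z‖ ^ 2 / (4 * t)) ≤ 1 := by
      apply Real.exp_le_one_iff.mpr
      have h0 : (0:ℝ) ≤ ‖z‖ ^ 2 / (4 * t) := by positivity
      rw [neg_div]
      linarith
    have h2 : (0:ℝ) ≤ (4*π*t) ^ (-(N:ℝ)/2) := Real.rpow_nonneg (by positivity) _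
    nlinarith
  have h1 : Integrable fun y => heatKernel N t (x - y) * u₀ y := by
    apply Integrable.mono' (hu.abs.const_mul ((4*π*t) ^ (-(N:ℝ)/2)))
    · exact ((hc.comp (continuous_const.sub continuous_id)).aestronglyMeasurable.mul hu.1)
    · refine Filter.Eventually.of_forall fun y => ?_
      rw [Real.norm_eq_abs, abs_mul,
        abs_of_nonneg (heatKernel_nonneg N t ht _)]
      exact mul_le_mul_of_nonneg_right (hKle _) (abs_nonneg _)
  have h2 : Integrable fun y => heatKernel N t x * u₀ y := hu.const_mul _
  have hcoord : ∀ i : Fin N, Continuous fun y : EuclideanSpace ℝ (Fin N) => y i := by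
    intro i
    exact (continuous_apply i).comp (PiLp.continuous_ofLp 2 fun _ : Fin N => ℝ)
  have habs_coord : ∀ (i : Fin N) (y : EuclideanSpace ℝ (Fin N)), |y i| ≤ ‖y‖ := by
    intro i y
    have h : (inner ℝ (EuclideanSpace.single i (1:ℝ)) y : ℝ) = y i := by
      rw [EuclideanSpace.inner_single_left]; simp
    calc |y i| = |(inner ℝ (EuclideanSpace.single i (1:ℝ)) y : ℝ)| := by rw [h]
      _ ≤ ‖EuclideanSpace.single i (1:ℝ)‖ * ‖y‖ := abs_real_inner_le_norm _ _
      _ = ‖y‖ := by rw [EuclideanSpace.norm_single]; simp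
  have hi3 : ∀ i : Fin N, Integrable fun y : EuclideanSpace ℝ (Fin N) => y i * u₀ y := by
    intro i
    apply Integrable.mono' (hu.abs.add hu2)
    · exact (hcoord i).aestronglyMeasurable.mul hu.1
    · refine Filter.Eventually.of_forall fun y => ?_
      rw [Real.norm_eq_abs, abs_mul]
      have h4 : |y i| ≤ 1 + ‖y‖ ^ 2 := by
        rcases le_total ‖y‖ 1 with h | h
        · calc |y i| ≤ ‖y‖ := habs_coord i y
            _ ≤ 1 := h
            _ ≤ 1 + ‖y‖ ^ 2 := by nlinarith
        · calc |y i| ≤ ‖y‖ := habs_coord i y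
            _ ≤ ‖y‖ ^ 2 := by nlinarith
            _ ≤ 1 + ‖y‖ ^ 2 := by nlinarith
      calc |y i| * |u₀ y| ≤ (1 + ‖y‖ ^ 2) * |u₀ y| :=
            mul_le_mul_of_nonneg_right h4 (abs_nonneg _)
        _ = |u₀ y| + ‖y‖ ^ 2 * |u₀ y| := by ring
  have h3 : ∀ i : Fin N, Integrable fun y : EuclideanSpace ℝ (Fin N) =>
      (y i * u₀ y) * (-(x i / (2 * t)) * heatKernel N t x) := fun i => (hi3 i).mul_const _
  have hinner : ∀ y : EuclideanSpace ℝ (Fin N), (inner ℝ x y : ℝ) = ∑ i, x i * y i := by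
    intro y; simp [PiLp.inner_apply, RCLike.inner_apply, mul_comm]
  have hptw : ∀ y : EuclideanSpace ℝ (Fin N),
      ∑ i : Fin N, (y i * u₀ y) * (-(x i / (2 * t)) * heatKernel N t x)
        = (-(inner ℝ x y : ℝ) / (2 * t)) * heatKernel N t x * u₀ y := by
    intro y
    calc ∑ i : Fin N, (y i * u₀ y) * (-(x i / (2 * t)) * heatKernel N t x)
        = ∑ i : Fin N, (x i * y i) * (-(1 / (2 * t)) * heatKernel N t x * u₀ y) :=
          Finset.sum_congr rfl fun i _ => by ring
      _ = (∑ i : Fin N, x i * y i) * (-(1 / (2 * t)) * heatKernel N t x * u₀ y) :=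
          (Finset.sum_mul _ _ _).symm
      _ = (-(inner ℝ x y : ℝ) / (2 * t)) * heatKernel N t x * u₀ y := by
          rw [hinner y]; ring
  have hsum : ∑ i : Fin N, (∫ y : EuclideanSpace ℝ (Fin N), y i * u₀ y) *
        (-(x i / (2 * t)) * heatKernel N t x)
      = ∫ y : EuclideanSpace ℝ (Fin N),
          (-(inner ℝ x y : ℝ) / (2 * t)) * heatKernel N t x * u₀ y := by
    have e1 : ∀ i : Fin N, (∫ y : EuclideanSpace ℝ (Fin N), y i * u₀ y) *
        (-(x i / (2 * t)) * heatKernel N t x)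
        = ∫ y : EuclideanSpace ℝ (Fin N), (y i * u₀ y) * (-(x i / (2 * t)) * heatKernel N t x) :=
      fun i => (integral_mul_const _ _).symm
    rw [Finset.sum_congr rfl fun i _ => e1 i, ← integral_finset_sum _ fun i _ => h3 i]
    exact integral_congr_ae (Filter.Eventually.of_forall fun y => hptw y)
  have h4 : Integrable fun y : EuclideanSpace ℝ (Fin N) =>
      (-(inner ℝ x y : ℝ) / (2 * t)) * heatKernel N t x * u₀ y := by
    refine (integrable_finset_sum _ fun i _ => h3 i).congr
      (Filter.Eventually.of_forall fun y => hptw y)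
  have h2' : (∫ y, u₀ y) * heatKernel N t x = ∫ y, heatKernel N t x * u₀ y := by
    rw [integral_const_mul, mul_comm]
  have h12 : Integrable fun y : EuclideanSpace ℝ (Fin N) =>
      heatKernel N t (x - y) * u₀ y - heatKernel N t x * u₀ y := h1.sub h2
  have e5 : (∫ y, (heatKernel N t (x - y) - heatKernel N t x -
        ((inner ℝ x y : ℝ) / (2 * t)) * heatKernel N t x) * u₀ y)
      = ∫ y, ((heatKernel N t (x - y) * u₀ y - heatKernel N t x * u₀ y) +
          (-(inner ℝ x y : ℝ) / (2 * t)) * heatKernel N t x * u₀ y) :=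
    integral_congr_ae (Filter.Eventually.of_forall fun y => by ring)
  rw [show heatSol N u₀ x t = ∫ y, heatKernel N t (x - y) * u₀ y from rfl, h2', hsum,
    e5, integral_add h12 h4, integral_sub h1 h2]

/-- Second-order `L¹` asymptotics: for data with finite second absolute moment,
`‖u(·,t) − M·G_t + Σᵢ 𝒩_{1,i} ∂_{x_i}G_t‖_{L¹} ≤ C·𝒩₂·t^{-1}` with `C = C(N)`,
where `∂_{x_i}G_t(x) = -(x_i/(2t))·G_t(x)`. -/
theorem heat_convergence_rate_second_moment_L1 (N : ℕ) (hN : 1 ≤ N) :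
    ∃ C : ℝ, 0 < C ∧ ∀ u₀ : EuclideanSpace ℝ (Fin N) → ℝ,
      Integrable u₀ →
      Integrable (fun y => ‖y‖ ^ 2 * |u₀ y|) →
      ∀ t : ℝ, 0 < t →
        (∫ x, |heatSol N u₀ x t - (∫ y, u₀ y) * heatKernel N t x +
            ∑ i : Fin N, (∫ y : EuclideanSpace ℝ (Fin N), y i * u₀ y) *
              (-(x i / (2 * t)) * heatKernel N t x)|) ≤
          C * (∫ y, ‖y‖ ^ 2 * |u₀ y|) * t ^ (-(1 : ℝ)) := by
  refine ⟨heatC0 N, heatC0_pos N, fun u₀ hu hu2 t ht => ?_⟩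
  set Rk : EuclideanSpace ℝ (Fin N) → EuclideanSpace ℝ (Fin N) → ℝ := fun x y =>
    heatKernel N t (x - y) - heatKernel N t x -
      ((inner ℝ x y : ℝ) / (2 * t)) * heatKernel N t x with hRk
  have hM2nn : 0 ≤ ∫ y, ‖y‖ ^ 2 * |u₀ y| := integral_nonneg fun y => by positivity
  have hRkc : Continuous fun p : EuclideanSpace ℝ (Fin N) × EuclideanSpace ℝ (Fin N) =>
      Rk p.1 p.2 := by
    have hc := heatKernel_continuous N t
    have c1 : Continuous fun p : EuclideanSpace ℝ (Fin N) × EuclideanSpace ℝ (Fin N) =>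
        heatKernel N t (p.1 - p.2) := hc.comp (continuous_fst.sub continuous_snd)
    have c2 : Continuous fun p : EuclideanSpace ℝ (Fin N) × EuclideanSpace ℝ (Fin N) =>
        heatKernel N t p.1 := hc.comp continuous_fst
    have c3 : Continuous fun p : EuclideanSpace ℝ (Fin N) × EuclideanSpace ℝ (Fin N) =>
        (inner ℝ p.1 p.2 : ℝ) := continuous_inner
    exact (c1.sub c2).sub (((c3.div_const _)).mul c2)
  have hu0snd : AEStronglyMeasurable
      (fun p : EuclideanSpace ℝ (Fin N) × EuclideanSpace ℝ (Fin N) => u₀ p.2)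
      (volume.prod volume) :=
    hu.1.comp_quasiMeasurePreserving MeasureTheory.Measure.quasiMeasurePreserving_snd
  have hmeas_prod : AEStronglyMeasurable
      (fun p : EuclideanSpace ℝ (Fin N) × EuclideanSpace ℝ (Fin N) => Rk p.1 p.2 * u₀ p.2)
      (volume.prod volume) := hRkc.aestronglyMeasurable.mul hu0snd
  have hF : AEStronglyMeasurable (fun x => ∫ y, Rk x y * u₀ y) volume :=
    hmeas_prod.integral_prod_right'
  have hdec : ∀ x : EuclideanSpace ℝ (Fin N),
      heatSol N u₀ x t - (∫ y, u₀ y) * heatKernel N t x +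
          ∑ i : Fin N, (∫ y : EuclideanSpace ℝ (Fin N), y i * u₀ y) *
            (-(x i / (2 * t)) * heatKernel N t x)
        = ∫ y, Rk x y * u₀ y := fun x => heat_decomp N u₀ hu hu2 ht x
  rw [integral_congr_ae (Filter.Eventually.of_forall fun x => by rw [hdec x])]
  rw [show (fun x => |∫ y, Rk x y * u₀ y|) = fun x => ‖∫ y, Rk x y * u₀ y‖ from
    funext fun x => (Real.norm_eq_abs _).symm]
  rw [integral_eq_lintegral_of_nonneg_ae
    (Filter.Eventually.of_forall fun x => norm_nonneg _) hF.norm]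
  have hbound : ∫⁻ x, ENNReal.ofReal ‖∫ y, Rk x y * u₀ y‖ ≤
      ENNReal.ofReal (heatC0 N * (∫ y, ‖y‖ ^ 2 * |u₀ y|) * t ^ (-(1:ℝ))) := by
    calc ∫⁻ x, ENNReal.ofReal ‖∫ y, Rk x y * u₀ y‖
        = ∫⁻ x, (‖∫ y, Rk x y * u₀ y‖₊ : ℝ≥0∞) := by
          apply lintegral_congr; intro x; rw [ofReal_norm_eq_enorm, enorm_eq_nnnorm]
      _ ≤ ∫⁻ x, ∫⁻ y, (‖Rk x y * u₀ y‖₊ : ℝ≥0∞) :=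
          lintegral_mono fun x => enorm_integral_le_lintegral_enorm _
      _ = ∫⁻ x, ∫⁻ y, (‖Rk x y‖₊ : ℝ≥0∞) * (‖u₀ y‖₊ : ℝ≥0∞) := by
          simp_rw [nnnorm_mul, ENNReal.coe_mul]
      _ = ∫⁻ y, ∫⁻ x, (‖Rk x y‖₊ : ℝ≥0∞) * (‖u₀ y‖₊ : ℝ≥0∞) :=
          lintegral_lintegral_swap
            (hRkc.aestronglyMeasurable.enorm.mul hu0snd.enorm)
      _ ≤ ∫⁻ y, ENNReal.ofReal (heatC0 N * ‖y‖ ^ 2 / t) * (‖u₀ y‖₊ : ℝ≥0∞) := by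
          apply lintegral_mono
          intro y
          dsimp only
          rw [lintegral_mul_const' _ _ ENNReal.coe_ne_top]
          exact mul_le_mul_left (heat_kernel_lintegral_bound N ht y) _
      _ = ∫⁻ y, ENNReal.ofReal (heatC0 N / t) * ENNReal.ofReal (‖y‖ ^ 2 * |u₀ y|) := by
          apply lintegral_congr
          intro y
          rw [← enorm_eq_nnnorm, Real.enorm_eq_ofReal_abs,
            ← ENNReal.ofReal_mul (div_nonneg (mul_nonneg (heatC0_pos N).le (sq_nonneg _)) ht.le),
            ← ENNReal.ofReal_mul (div_nonneg (heatC0_pos N).le ht.le)]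
          congr 1
          ring
      _ = ENNReal.ofReal (heatC0 N / t) * ∫⁻ y, ENNReal.ofReal (‖y‖ ^ 2 * |u₀ y|) :=
          lintegral_const_mul' _ _ ENNReal.ofReal_ne_top
      _ = ENNReal.ofReal (heatC0 N / t) * ENNReal.ofReal (∫ y, ‖y‖ ^ 2 * |u₀ y|) := by
          rw [← ofReal_integral_eq_lintegral_ofReal hu2
            (Filter.Eventually.of_forall fun y => by positivity)]
      _ ≤ ENNReal.ofReal (heatC0 N * (∫ y, ‖y‖ ^ 2 * |u₀ y|) * t ^ (-(1:ℝ))) := by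
          rw [← ENNReal.ofReal_mul (div_nonneg (heatC0_pos N).le ht.le)]
          apply ENNReal.ofReal_le_ofReal
          rw [Real.rpow_neg_one]
          apply le_of_eq
          field_simp
  have hRHSnn : 0 ≤ heatC0 N * (∫ y, ‖y‖ ^ 2 * |u₀ y|) * t ^ (-(1:ℝ)) :=
    mul_nonneg (mul_nonneg (heatC0_pos N).le hM2nn) (Real.rpow_nonneg ht.le _)
  exact ENNReal.toReal_le_of_le_ofReal hRHSnn hbound
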